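/- Let 𝐇 be a connected etog with pieces 𝐇₁ ⊕_x̄ 𝐇₂ = 𝐇, let 𝐃 ∈ defects(𝐇₁, 𝐇₂), let 𝔻 be a linear graph with rel(𝔻) = 𝐃, and let ψ be an embedding of 𝐃 into 𝔻 fixing x̄ pointwise. Then for every map θ : V(𝐇) → V(𝔻) whose restrictions to 𝐇₁ and to 𝐇₂ are embeddings into 𝔻, the map ξ := ψ⁻¹ ∘ θ from V(𝐇) to V(𝐃) has the property that its restrictions to 𝐇₁ and to 𝐇₂ are embeddings into 𝐃. -/

import Mathlib

/-- A tree-ordered graph (tog): a simple graph together with a partial order on its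
vertices that is a tree order (sets of predecessors are linearly ordered) and that
guards the edge relation (endpoints of every edge are comparable). -/
structure Tog (V : Type) where
  G : SimpleGraph V
  le : V → V → Prop
  le_refl : ∀ v, le v v
  le_antisymm : ∀ u v, le u v → le v u → u = v
  le_trans : ∀ u v w, le u v → le v w → le u w
  tree : ∀ x y z, le y x → le z x → le y z ∨ le z y
  guard : ∀ u v, G.Adj u v → le u v ∨ le v u

namespace Tog

variable {V W : Type}

/-- A linear graph is a tog whose order is total. -/
def IsLinear (H : Tog V) : Prop := ∀ u v, H.le u v ∨ H.le v u

/-- An embedding of a tog `H` into a tog `G`: an injective map preserving edges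
and the order. -/
def IsEmbedding (H : Tog V) (G : Tog W) (φ : V → W) : Prop :=
  Function.Injective φ ∧ (∀ u v, H.G.Adj u v → G.G.Adj (φ u) (φ v)) ∧
    ∀ u v, H.le u v → G.le (φ u) (φ v)

/-- An embedding of the induced subtog `H[A]` into `G`, given as a map defined on
all of `V` but constrained only on `A`.  -/
def IsEmbeddingOn (H : Tog V) (G : Tog W) (A : Set V) (φ : V → W) : Prop :=
  Set.InjOn φ A ∧ (∀ u ∈ A, ∀ v ∈ A, H.G.Adj u v → G.G.Adj (φ u) (φ v)) ∧
    ∀ u ∈ A, ∀ v ∈ A, H.le u v → G.le (φ u) (φ v)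

/-- The stem of a tog: the set of vertices comparable with every vertex,
i.e. the maximal linearly ordered downward chain lying below all other vertices. -/
def stem (H : Tog V) : Set V := {u | ∀ v, H.le u v ∨ H.le v u}

/-- `s` is a stem prefix of `H`: a downward-closed subset of the stem. -/
def IsStemPrefix (H : Tog V) (s : Set V) : Prop :=
  s ⊆ H.stem ∧ ∀ u ∈ H.stem, ∀ v ∈ s, H.le u v → u ∈ s

/-- Leaves of a tog: vertices maximal in the tree order. -/
def leaves (H : Tog V) : Set V := {u | ∀ v, H.le u v → v = u}

/-- The vertex set of the piece induced by a set `S` of leaves: the union of the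
root paths of the members of `S`. -/
def pieceSet (H : Tog V) (S : Set V) : Set V := {y | ∃ x ∈ S, H.le y x}

/-- `H = H[A₁] ⊕ H[A₂]`: the vertex sets `A₁`, `A₂` are pieces of `H` induced by
nonempty leaf sets that partition the leaves of `H`. -/
def PieceDecomp (H : Tog V) (A₁ A₂ : Set V) : Prop :=
  ∃ S₁ S₂ : Set V, S₁.Nonempty ∧ S₂.Nonempty ∧ Disjoint S₁ S₂ ∧
    S₁ ∪ S₂ = H.leaves ∧ A₁ = H.pieceSet S₁ ∧ A₂ = H.pieceSet S₂

/-- The induced subtog on a vertex set `A`. -/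
def induce (H : Tog V) (A : Set V) : Tog A where
  G := H.G.induce A
  le u v := H.le u v
  le_refl v := H.le_refl v
  le_antisymm u v h1 h2 := Subtype.ext (H.le_antisymm _ _ h1 h2)
  le_trans u v w := H.le_trans _ _ _
  tree x y z := H.tree _ _ _
  guard u v h := H.guard _ _ h

/-- The ancestor relation of the elimination tree of a (connected) linear graph `H`:
`u` is an ancestor of `v` iff there is a walk from `u` to `v` all of whose vertices
come after `u` in the linear order. -/
def relLe (H : Tog V) (u v : V) : Prop :=
  ∃ p : H.G.Walk u v, ∀ w ∈ p.support, H.le u w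

/-- The tree order relaxation `rel(H)` of a linear graph `H`: the tog on the same
graph whose order is the ancestor relation of the elimination tree of `H`. -/
def relax (H : Tog V) (hlin : H.IsLinear) : Tog V where
  G := H.G
  le := H.relLe
  le_refl v := ⟨SimpleGraph.Walk.nil, by
    intro w hw
    simp only [SimpleGraph.Walk.support_nil, List.mem_singleton] at hw
    subst hw; exact H.le_refl w⟩
  le_antisymm u v h1 h2 := by
    obtain ⟨p, hp⟩ := h1; obtain ⟨q, hq⟩ := h2
    exact H.le_antisymm u v (hp v p.end_mem_support) (hq u q.end_mem_support)
  le_trans u v w h1 h2 := by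
    obtain ⟨p, hp⟩ := h1; obtain ⟨q, hq⟩ := h2
    refine ⟨p.append q, ?_⟩
    intro x hx
    rcases (SimpleGraph.Walk.mem_support_append_iff _ _).1 hx with h | h
    · exact hp x h
    · exact H.le_trans u v x (hp v p.end_mem_support) (hq x h)
  tree x y z h1 h2 := by
    obtain ⟨p, hp⟩ := h1; obtain ⟨q, hq⟩ := h2
    rcases hlin y z with h | h
    · left
      refine ⟨p.append q.reverse, ?_⟩
      intro w hw
      rcases (SimpleGraph.Walk.mem_support_append_iff _ _).1 hw with hw | hw
      · exact hp w hw
      · rw [SimpleGraph.Walk.support_reverse, List.mem_reverse] at hw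
        exact H.le_trans y z w h (hq w hw)
    · right
      refine ⟨q.append p.reverse, ?_⟩
      intro w hw
      rcases (SimpleGraph.Walk.mem_support_append_iff _ _).1 hw with hw | hw
      · exact hq w hw
      · rw [SimpleGraph.Walk.support_reverse, List.mem_reverse] at hw
        exact H.le_trans z y w h (hp w hw)
  guard u v h := by
    rcases H.guard u v h with hle | hle
    · left
      refine ⟨SimpleGraph.Walk.cons h SimpleGraph.Walk.nil, ?_⟩
      intro w hw
      simp only [SimpleGraph.Walk.support_cons, SimpleGraph.Walk.support_nil,
        List.mem_cons, List.mem_singleton] at hw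
      rcases hw with rfl | hw
      · exact H.le_refl w
      · rcases hw with rfl | hw
        · exact hle
        · simp at hw
    · right
      refine ⟨SimpleGraph.Walk.cons h.symm SimpleGraph.Walk.nil, ?_⟩
      intro w hw
      simp only [SimpleGraph.Walk.support_cons, SimpleGraph.Walk.support_nil,
        List.mem_cons, List.mem_singleton] at hw
      rcases hw with rfl | hw
      · exact H.le_refl w
      · rcases hw with rfl | hw
        · exact hle
        · simp at hw

/-- A tog is an etog (elimination-ordered graph) if it is the tree order relaxation
of some linear graph. -/
def IsEtog (D : Tog V) : Prop := ∃ (L : Tog V) (hlin : L.IsLinear), D = L.relax hlin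

/-- A pattern relaxation of a pattern graph `H₀`: the relaxation of some linear
ordering of `H₀`. -/
def IsPatternRelaxation (H₀ : SimpleGraph V) (HH : Tog V) : Prop :=
  ∃ (L : Tog V) (hlin : L.IsLinear), L.G = H₀ ∧ HH = L.relax hlin

/-- Weakly `r`-reachable vertices from `u` in an ordered graph `G`. -/
def wreach (G : Tog W) (r : ℕ) (u : W) : Set W :=
  {v | ∃ p : G.G.Walk u v, p.IsPath ∧ p.length ≤ r ∧ ∀ w ∈ p.support, G.le v w}

/-- Strongly `r`-reachable vertices from `u` in an ordered graph `G`. -/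
def sreach (G : Tog W) (r : ℕ) (u : W) : Set W :=
  {v | G.le v u ∧ ∃ p : G.G.Walk u v, p.IsPath ∧ p.length ≤ r ∧
    ∀ w ∈ p.support, w ≠ v → G.le u w}

/-- The embedding count `#_{x̄→ȳ}(H, G)`: the number of embeddings of `H` into `G`
mapping the (ordered) set `xb` onto `yb`. -/
noncomputable def embCount (H : Tog V) (G : Tog W) (xb : Set V) (yb : Set W) : ℕ :=
  {φ : V → W | H.IsEmbedding G φ ∧ φ '' xb = yb}.ncard

/-- The embedding count of the piece `H[A]` into `G`. -/
noncomputable def pieceEmbCount (H : Tog V) (G : Tog W) (A : Set V)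
    (xb : Set V) (yb : Set W) : ℕ :=
  {φ : A → W | (H.induce A).IsEmbedding G φ ∧ φ '' (Subtype.val ⁻¹' xb) = yb}.ncard

/-- The relaxed embedding count `#_{x̄→ȳ}(H, G | H₁, H₂)`: the number of maps whose
restrictions to the pieces `H[A₁]` and `H[A₂]` are embeddings into `G` and which map
`xb` onto `yb`. -/
noncomputable def relEmbCount (H : Tog V) (G : Tog W) (A₁ A₂ : Set V)
    (xb : Set V) (yb : Set W) : ℕ :=
  {φ : V → W | H.IsEmbeddingOn G A₁ φ ∧ H.IsEmbeddingOn G A₂ φ ∧ φ '' xb = yb}.ncard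

/-- A defect of the pieces `H[A₁]`, `H[A₂]` (decomposed along the stem prefix `xb`):
an etog `D` into which `H` does not embed, `H[A₁]` embeds via the identity, `H[A₂]`
embeds via a map `φ` that is the identity on `(A₂ \ A₁) ∪ xb`, and whose vertex set
is `A₁ ∪ φ(A₂)`. -/
def IsDefect (H : Tog V) (A₁ A₂ xb : Set V) (D : Tog V) : Prop :=
  IsEtog D ∧
  (¬ ∃ ψ : V → V, H.IsEmbedding D ψ) ∧
  H.IsEmbeddingOn D A₁ id ∧
  ∃ φ : V → V, H.IsEmbeddingOn D A₂ φ ∧ (∀ v ∈ (A₂ \ A₁) ∪ xb, φ v = v) ∧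
    A₁ ∪ φ '' A₂ = Set.univ

/-- Automorphism of a tog. -/
def IsAuto (H : Tog V) (φ : V → V) : Prop :=
  Function.Bijective φ ∧ (∀ u v, H.G.Adj u v ↔ H.G.Adj (φ u) (φ v)) ∧
    ∀ u v, H.le u v ↔ H.le (φ u) (φ v)

/-- The induced subtogs `H[xb]` and `G[yb]` are isomorphic. -/
def IndIso (H : Tog V) (G : Tog W) (xb : Set V) (yb : Set W) : Prop :=
  ∃ f : V → W, Set.BijOn f xb yb ∧ ∀ u ∈ xb, ∀ v ∈ xb,
    (H.G.Adj u v ↔ G.G.Adj (f u) (f v)) ∧ (H.le u v ↔ G.le (f u) (f v))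

end Tog


section Aux

open Tog

/-- An injective self-map preserving a relation on a finite type also reflects it. -/
lemma reflect_of_preserve {V : Type} [Fintype V] (f : V → V)
    (hf : Function.Injective f) (R : V → V → Prop)
    (hpres : ∀ a b, R a b → R (f a) (f b)) :
    ∀ a b, R (f a) (f b) → R a b := by
  intro a b h
  set S := {p : V × V // R p.1 p.2}
  have hinj : Function.Injective
      (fun p : S => (⟨(f p.1.1, f p.1.2), hpres _ _ p.2⟩ : S)) := by
    rintro ⟨⟨a1, a2⟩, ha⟩ ⟨⟨b1, b2⟩, hb⟩ he
    simp only [Subtype.mk.injEq, Prod.mk.injEq] at he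
    exact Subtype.ext (Prod.ext (hf he.1) (hf he.2))
  have hsurj := Finite.injective_iff_surjective.mp hinj
  obtain ⟨⟨⟨c, d⟩, hcd⟩, he⟩ := hsurj ⟨(f a, f b), h⟩
  have he' : (f c, f d) = (f a, f b) := congrArg Subtype.val he
  rw [Prod.mk.injEq] at he'
  rwa [hf he'.1, hf he'.2] at hcd

lemma Tog.relLe_le {V : Type} {L : Tog V} {u v : V} (h : L.relLe u v) : L.le u v := by
  obtain ⟨p, hp⟩ := h
  exact hp v p.end_mem_support

lemma Tog.relLe_of_mem_support {V : Type} {L : Tog V} {u v w : V}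
    (p : L.G.Walk u v) (hp : ∀ x ∈ p.support, L.le u x) (hw : w ∈ p.support) :
    L.relLe u w := by
  classical
  exact ⟨p.takeUntil w hw, fun x hx => hp x (p.support_takeUntil_subset hw hx)⟩

/-- In a finite tog, every vertex lies below some leaf. -/
lemma Tog.exists_leaf {V : Type} [Fintype V] (H : Tog V) (v : V) :
    ∃ m, H.le v m ∧ m ∈ H.leaves := by
  classical
  letI : PartialOrder V :=
    { le := H.le
      le_refl := H.le_refl
      le_trans := H.le_trans
      le_antisymm := H.le_antisymm }
  obtain ⟨m, hm, hmax⟩ := Set.Finite.exists_maximalFor id {w | H.le v w}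
    (Set.toFinite _) ⟨v, H.le_refl v⟩
  refine ⟨m, hm, fun w hw => ?_⟩
  exact H.le_antisymm w m (hmax (j := w) (H.le_trans _ _ _ hm hw) hw) hw

end Aux

/-- Claim inside Lemma frankie-says-relax: pulling a relaxed
embedding pair back along an embedding `ψ : 𝐃 ↪ 𝔻` fixing the stem yields a
relaxed embedding pair into `𝐃`. -/
theorem pullback_relaxed_embedding {V : Type} [Fintype V]
    (HH : Tog V) (hconn : HH.G.Connected) (hEtog : HH.IsEtog)
    (A₁ A₂ : Set V) (hdec : HH.PieceDecomp A₁ A₂)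
    (D : Tog V) (hD : Tog.IsDefect HH A₁ A₂ HH.stem D)
    (L : Tog V) (hlin : L.IsLinear) (hrel : L.relax hlin = D)
    (ψ : V → V) (hψ : D.IsEmbedding L ψ) (hψfix : ∀ v ∈ HH.stem, ψ v = v)
    (θ : V → V) (hθ1 : HH.IsEmbeddingOn L A₁ θ) (hθ2 : HH.IsEmbeddingOn L A₂ θ)
    (ξ : V → V) (hξ : ∀ v, ψ (ξ v) = θ v) :
    HH.IsEmbeddingOn D A₁ ξ ∧ HH.IsEmbeddingOn D A₂ ξ := by
  classical
  obtain ⟨M, hM, rfl⟩ := hEtog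
  subst hrel
  obtain ⟨S₁, S₂, hS1ne, hS2ne, hdisj, hS, hA1, hA2⟩ := hdec
  subst hA1; subst hA2
  have hψinj : Function.Injective ψ := hψ.1
  have hψadj : ∀ a b, L.G.Adj a b → L.G.Adj (ψ a) (ψ b) := hψ.2.1
  have hψle : ∀ a b, L.relLe a b → L.le (ψ a) (ψ b) := hψ.2.2
  have hψadjrefl := reflect_of_preserve ψ hψinj L.G.Adj hψadj
  have hψrel : ∀ a b, L.relLe a b → L.relLe (ψ a) (ψ b) := by
    rintro a b ⟨p, hp⟩
    refine ⟨p.map ⟨ψ, fun h => hψadj _ _ h⟩, ?_⟩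
    intro w hw
    rw [SimpleGraph.Walk.support_map, List.mem_map] at hw
    obtain ⟨x, hx, rfl⟩ := hw
    exact hψle a x (Tog.relLe_of_mem_support p hp hx)
  have hdown : ∀ (S : Set V) (a b : V), (M.relax hM).le a b →
      b ∈ (M.relax hM).pieceSet S → a ∈ (M.relax hM).pieceSet S := by
    rintro S a b hab ⟨x, hx, hbx⟩
    exact ⟨x, hx, (M.relax hM).le_trans _ _ _ hab hbx⟩
  have hcov : ∀ v : V, v ∈ (M.relax hM).pieceSet S₁ ∪ (M.relax hM).pieceSet S₂ := by
    intro v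
    obtain ⟨m, hvm, hmleaf⟩ := (M.relax hM).exists_leaf v
    rw [← hS] at hmleaf
    rcases hmleaf with hm | hm
    · exact Or.inl ⟨m, hm, hvm⟩
    · exact Or.inr ⟨m, hm, hvm⟩
  have hξinj : ∀ (A : Set V), (M.relax hM).IsEmbeddingOn L A θ → Set.InjOn ξ A := by
    intro A hθA a ha b hb he
    apply hθA.1 ha hb
    rw [← hξ a, ← hξ b, he]
  have hξadj : ∀ (A : Set V), (M.relax hM).IsEmbeddingOn L A θ →
      ∀ u ∈ A, ∀ v ∈ A, M.G.Adj u v → L.G.Adj (ξ u) (ξ v) := by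
    intro A hθA u hu v hv h
    apply hψadjrefl
    rw [hξ, hξ]
    exact hθA.2.1 u hu v hv h
  have hedge : ∀ a b, M.G.Adj a b →
      (a ∈ (M.relax hM).pieceSet S₁ ∧ b ∈ (M.relax hM).pieceSet S₁) ∨
      (a ∈ (M.relax hM).pieceSet S₂ ∧ b ∈ (M.relax hM).pieceSet S₂) := by
    intro a b h
    rcases (M.relax hM).guard a b h with hle | hle
    · rcases hcov b with hb | hb
      · exact Or.inl ⟨hdown _ a b hle hb, hb⟩
      · exact Or.inr ⟨hdown _ a b hle hb, hb⟩
    · rcases hcov a with ha | ha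
      · exact Or.inl ⟨ha, hdown _ b a hle ha⟩
      · exact Or.inr ⟨ha, hdown _ b a hle ha⟩
  have step : ∀ u x y : V, (M.relax hM).le u x → (M.relax hM).le u y → M.G.Adj x y →
      L.relLe (ξ u) (ξ x) → L.relLe (ξ u) (ξ y) := by
    intro u x y hux huy hxy hx
    obtain ⟨A, hθA, hdownA, hxA, hyA⟩ :
        ∃ A : Set V, (M.relax hM).IsEmbeddingOn L A θ ∧
          (∀ a b : V, (M.relax hM).le a b → b ∈ A → a ∈ A) ∧ x ∈ A ∧ y ∈ A := by
      rcases hedge x y hxy with ⟨h1, h2⟩ | ⟨h1, h2⟩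
      · exact ⟨_, hθ1, hdown S₁, h1, h2⟩
      · exact ⟨_, hθ2, hdown S₂, h1, h2⟩
    have hadjξ : L.G.Adj (ξ x) (ξ y) := hξadj A hθA x hxA y hyA hxy
    rcases (L.relax hlin).guard (ξ x) (ξ y) hadjξ with h | h
    · exact (L.relax hlin).le_trans _ _ _ hx h
    · rcases (L.relax hlin).tree (ξ x) (ξ u) (ξ y) hx h with h2 | h2
      · exact h2
      · have h3 : L.le (θ y) (θ u) := by
          have h4 := hψrel _ _ h2
          rw [hξ, hξ] at h4
          exact Tog.relLe_le h4
        have huA : u ∈ A := hdownA u y huy hyA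
        have h4 : L.le (θ u) (θ y) := hθA.2.2 u huA y hyA huy
        have h5 : u = y := hθA.1 huA hyA (L.le_antisymm _ _ h4 h3)
        subst h5
        exact (L.relax hlin).le_refl (ξ u)
  have main : ∀ u v : V, (M.relax hM).le u v → (L.relax hlin).le (ξ u) (ξ v) := by
    intro u v huv
    obtain ⟨p, hp⟩ := huv
    have hsup : ∀ w ∈ p.support, (M.relax hM).le u w :=
      fun w hw => Tog.relLe_of_mem_support p hp hw
    have key : ∀ (x : V) (q : M.G.Walk x v), (∀ w ∈ q.support, (M.relax hM).le u w) →
        L.relLe (ξ u) (ξ x) → L.relLe (ξ u) (ξ v) := by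
      clear hsup hp p
      intro x q
      induction q with
      | nil => exact fun _ h => h
      | cons ha q ih =>
        intro hs hx
        have h1 : ∀ w ∈ q.support, (M.relax hM).le u w := by
          intro w hw
          apply hs
          rw [SimpleGraph.Walk.support_cons]
          exact List.mem_cons_of_mem _ hw
        exact ih h1 (step u _ _ (hs _ (SimpleGraph.Walk.start_mem_support _))
          (h1 _ (SimpleGraph.Walk.start_mem_support _)) ha hx)
    exact key u p hsup ((L.relax hlin).le_refl (ξ u))
  exact ⟨⟨hξinj _ hθ1, hξadj _ hθ1, fun u _ v _ h => main u v h⟩,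
         ⟨hξinj _ hθ2, hξadj _ hθ2, fun u _ v _ h => main u v h⟩⟩
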